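/- Let φ : [0,∞) → [0,∞) be an unbounded concave function with φ(0) = 0 and lim_{t→0+} φ(t) = 0. Then the transformed Euclidean half line ([0,∞), |·|_φ) is Gromov hyperbolic if and only if either (i) there exist λ > 0 and a nonnegative, bounded, continuous concave function f : [0,∞) → [0,∞) with f(0) = 0 such that φ(x) = λx + f(x) for all x ≥ 0, or (ii) the function x ↦ φ(2x) − φ(x) is bounded. -/

import Mathlib

/-- `d` is a metric on `X`: it vanishes exactly on the diagonal, is symmetric,
and satisfies the triangle inequality. -/
def IsMetricOn {X : Type*} (d : X → X → ℝ) : Prop :=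
  (∀ x y : X, d x y = 0 ↔ x = y) ∧ (∀ x y : X, d x y = d y x) ∧
    (∀ x y z : X, d x z ≤ d x y + d y z)

/-- `φ : [0,∞) → [0,∞)` is a metric transform: for every metric space `(X,d)`,
`φ ∘ d` is again a metric on `X`. -/
def IsMetricTransform (φ : ℝ → ℝ) : Prop :=
  ∀ (X : Type) (d : X → X → ℝ), IsMetricOn d → IsMetricOn (fun x y => φ (d x y))

/-- The Gromov product `(x|y)_w` for a distance function `d`. -/
noncomputable def gromovProd {X : Type*} (d : X → X → ℝ) (w x y : X) : ℝ :=
  (d x w + d y w - d x y) / 2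

/-- `d` is `δ`-hyperbolic: `(x|y)_w ≥ min{(x|z)_w, (y|z)_w} − δ` for all `x,y,z,w`. -/
def IsDeltaHyp {X : Type*} (d : X → X → ℝ) (δ : ℝ) : Prop :=
  ∀ w x y z : X, min (gromovProd d w x z) (gromovProd d w y z) - δ ≤ gromovProd d w x y

/-- `d` is Gromov hyperbolic: it is `δ`-hyperbolic for some `δ ≥ 0`. -/
def IsGromovHyp {X : Type*} (d : X → X → ℝ) : Prop :=
  ∃ δ : ℝ, 0 ≤ δ ∧ IsDeltaHyp d δ

/-- `φ` is approximately nondecreasing on `[0,∞)`: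
`η`-nondecreasing for some `η ≥ 0`. -/
def ApproxNondecreasing (φ : ℝ → ℝ) : Prop :=
  ∃ η : ℝ, 0 ≤ η ∧ ∀ t s : ℝ, 0 ≤ t → t ≤ s → φ t ≤ φ s + η

/-- `φ` is unbounded on `[0,∞)`. -/
def UnboundedOnNonneg (φ : ℝ → ℝ) : Prop :=
  ∀ M : ℝ, ∃ t : ℝ, 0 ≤ t ∧ M < φ t

/-- `φ` is a `(λ,k)`-approximate dilation for some `λ > 0`, `k ≥ 0`. -/
def ApproxDilation (φ : ℝ → ℝ) : Prop :=
  ∃ lam k : ℝ, 0 < lam ∧ 0 ≤ k ∧ ∀ t : ℝ, 0 ≤ t → |φ t - lam * t| ≤ k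

/-- `φ` is logarithm-like: `t ↦ φ(2t) − φ(t)` is bounded from above on `[0,∞)`. -/
def LogarithmLike (φ : ℝ → ℝ) : Prop :=
  ∃ C : ℝ, ∀ t : ℝ, 0 ≤ t → φ (2 * t) - φ t ≤ C

/-- The distance `|x − y|_φ = φ(|x − y|)` on the half line `[0,∞)`. -/
noncomputable def halfLineDist (φ : ℝ → ℝ) (x y : {t : ℝ // 0 ≤ t}) : ℝ :=
  φ |x.1 - y.1|

/-- `(X,d)` contains a `k`-rough geodesic ray for some `k ≥ 0`. -/
def HasRoughGeodesicRay (X : Type*) (d : X → X → ℝ) : Prop :=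
  ∃ k : ℝ, 0 ≤ k ∧ ∃ γ : ℝ → X, ∀ t s : ℝ, 0 ≤ t → 0 ≤ s →
    |t - s| - k ≤ d (γ t) (γ s) ∧ d (γ t) (γ s) ≤ |t - s| + k

/-- `d` is approximately ultrametric: `δ`-ultrametric for some `δ ≥ 0`. -/
def ApproxUltrametric {X : Type*} (d : X → X → ℝ) : Prop :=
  ∃ δ : ℝ, 0 ≤ δ ∧ ∀ x y z : X, d x y ≤ max (d x z) (d z y) + δ

/-- `d` is `k`-roughly geodesic: every pair of points is joined by a `k`-rough
geodesic segment. -/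
def RoughlyGeodesicK {X : Type*} (d : X → X → ℝ) (k : ℝ) : Prop :=
  ∀ x y : X, ∃ b : ℝ, 0 ≤ b ∧ ∃ γ : ℝ → X, γ 0 = x ∧ γ b = y ∧
    ∀ t s : ℝ, t ∈ Set.Icc 0 b → s ∈ Set.Icc 0 b →
      |t - s| - k ≤ d (γ t) (γ s) ∧ d (γ t) (γ s) ≤ |t - s| + k

/-- `d` has the `k`-rough midpoint property. -/
def RoughMidpointK {X : Type*} (d : X → X → ℝ) (k : ℝ) : Prop :=
  ∀ x y : X, ∃ z : X, max (d x z) (d y z) ≤ d x y / 2 + k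

/-- `(a,b,c)` is a triangle triplet. -/
def IsTriangleTriplet (a b c : ℝ) : Prop := a ≤ b + c ∧ b ≤ a + c ∧ c ≤ a + b

/-! ### Auxiliary lemmas -/

lemma line0 (w x y z : ℝ) :
    min (|x - w| + |z - w| - |x - z|) (|y - w| + |z - w| - |y - z|) ≤
      |x - w| + |y - w| - |x - y| := by
  rw [min_le_iff]
  rcases abs_cases (x - w) with ⟨h1, h1'⟩ | ⟨h1, h1'⟩ <;>
  rcases abs_cases (y - w) with ⟨h2, h2'⟩ | ⟨h2, h2'⟩ <;>
  rcases abs_cases (z - w) with ⟨h3, h3'⟩ | ⟨h3, h3'⟩ <;>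
  rcases abs_cases (x - z) with ⟨h4, h4'⟩ | ⟨h4, h4'⟩ <;>
  rcases abs_cases (y - z) with ⟨h5, h5'⟩ | ⟨h5, h5'⟩ <;>
  rcases abs_cases (x - y) with ⟨h6, h6'⟩ | ⟨h6, h6'⟩ <;>
  first
  | exact Or.inl (by linarith)
  | exact Or.inr (by linarith)

lemma conc3 {φ : ℝ → ℝ} (hconc : ConcaveOn ℝ (Set.Ici 0) φ) {s t u : ℝ}
    (hs : 0 ≤ s) (hst : s ≤ t) (htu : t ≤ u) :
    (u - t) * φ s + (t - s) * φ u ≤ (u - s) * φ t := by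
  rcases eq_or_lt_of_le (hst.trans htu) with h | h
  · have h1 : t = s := le_antisymm (h ▸ htu) hst
    rw [← h, h1]; ring_nf; exact le_refl _
  · have hus : 0 < u - s := by linarith
    have ha' : (0:ℝ) ≤ (u - t) / (u - s) := div_nonneg (by linarith) (by linarith)
    have hb' : (0:ℝ) ≤ (t - s) / (u - s) := div_nonneg (by linarith) (by linarith)
    have hab' : (u - t) / (u - s) + (t - s) / (u - s) = 1 := by field_simp; ring
    have key := hconc.2 (Set.mem_Ici.mpr hs) (Set.mem_Ici.mpr (hs.trans (hst.trans htu)))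
      ha' hb' hab'
    have hx : ((u - t) / (u - s)) • s + ((t - s) / (u - s)) • u = t := by
      simp only [smul_eq_mul]; field_simp; ring
    rw [hx] at key
    simp only [smul_eq_mul] at key
    rw [div_mul_eq_mul_div, div_mul_eq_mul_div, ← add_div, div_le_iff₀ hus] at key
    nlinarith [key]

noncomputable def asympSlope (φ : ℝ → ℝ) : ℝ := sInf ((fun u => φ u / u) '' Set.Ioi 0)

lemma slope_set_nonempty (φ : ℝ → ℝ) : ((fun u => φ u / u) '' Set.Ioi 0).Nonempty :=
  ⟨φ 1 / 1, ⟨1, by norm_num⟩⟩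

lemma slope_set_bdd {φ : ℝ → ℝ} (hnonneg : ∀ t : ℝ, 0 ≤ t → 0 ≤ φ t) :
    BddBelow ((fun u => φ u / u) '' Set.Ioi 0) := by
  refine ⟨0, ?_⟩
  rintro r ⟨u, hu, rfl⟩
  exact div_nonneg (hnonneg u (le_of_lt hu)) (le_of_lt hu)

lemma asympSlope_nonneg {φ : ℝ → ℝ} (hnonneg : ∀ t : ℝ, 0 ≤ t → 0 ≤ φ t) :
    0 ≤ asympSlope φ := by
  refine le_csInf (slope_set_nonempty φ) ?_
  rintro r ⟨u, hu, rfl⟩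
  exact div_nonneg (hnonneg u (le_of_lt hu)) (le_of_lt hu)

lemma asympSlope_le {φ : ℝ → ℝ} (hnonneg : ∀ t : ℝ, 0 ≤ t → 0 ≤ φ t)
    {u : ℝ} (hu : 0 < u) : asympSlope φ * u ≤ φ u := by
  have h2 : asympSlope φ ≤ φ u / u := csInf_le (slope_set_bdd hnonneg) ⟨u, hu, rfl⟩
  calc asympSlope φ * u ≤ (φ u / u) * u := by nlinarith
    _ = φ u := by field_simp

lemma asympSlope_le' {φ : ℝ → ℝ} (hnonneg : ∀ t : ℝ, 0 ≤ t → 0 ≤ φ t) (h0 : φ 0 = 0)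
    {u : ℝ} (hu : 0 ≤ u) : asympSlope φ * u ≤ φ u := by
  rcases eq_or_lt_of_le hu with h | h
  · rw [← h, h0]; simp
  · exact asympSlope_le hnonneg h

lemma exists_slope_lt {φ : ℝ → ℝ} (hnonneg : ∀ t : ℝ, 0 ≤ t → 0 ≤ φ t)
    {ε : ℝ} (hε : 0 < ε) :
    ∃ u : ℝ, 0 < u ∧ φ u / u < asympSlope φ + ε := by
  have h := (csInf_lt_iff (slope_set_bdd hnonneg) (slope_set_nonempty φ)).mp
    (show sInf ((fun u => φ u / u) '' Set.Ioi 0) < asympSlope φ + ε by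
      have h2 : sInf ((fun u => φ u / u) '' Set.Ioi 0) = asympSlope φ := rfl
      linarith)
  obtain ⟨r, ⟨u, hu, rfl⟩, hr⟩ := h
  exact ⟨u, hu, hr⟩

lemma slope_anti {φ : ℝ → ℝ} (hconc : ConcaveOn ℝ (Set.Ici 0) φ) (h0 : φ 0 = 0)
    {u v : ℝ} (hu : 0 < u) (huv : u ≤ v) : φ v / v ≤ φ u / u := by
  have h := conc3 hconc (le_refl 0) (le_of_lt hu) huv
  rw [h0] at h
  have hv : 0 < v := lt_of_lt_of_le hu huv
  rw [div_le_div_iff₀ hv hu]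
  nlinarith

lemma incr_ge {φ : ℝ → ℝ} (hnonneg : ∀ t : ℝ, 0 ≤ t → 0 ≤ φ t)
    (hconc : ConcaveOn ℝ (Set.Ici 0) φ)
    {a b : ℝ} (ha : 0 ≤ a) (hab : a ≤ b) :
    asympSlope φ * (b - a) ≤ φ b - φ a := by
  rcases eq_or_lt_of_le hab with h | h
  · rw [h]; simp
  · by_contra hcon
    push_neg at hcon
    have hba : 0 < b - a := by linarith
    have hb : 0 < b := lt_of_le_of_lt ha h
    set Λ := asympSlope φ with hΛdef
    set η := Λ * (b - a) - (φ b - φ a) with hη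
    have hηpos : 0 < η := by rw [hη]; linarith
    set A := (b - a) * (φ a - Λ * a) with hA
    set v := max b (A / η + a + 1) with hv
    have hvb : b ≤ v := le_max_left _ _
    have hv' : A / η + a + 1 ≤ v := le_max_right _ _
    have hvpos : 0 < v := lt_of_lt_of_le hb hvb
    have hdiv : A / η * η = A := div_mul_cancel₀ _ (ne_of_gt hηpos)
    have h3 := conc3 hconc ha (le_of_lt h) hvb
    have e2 : (b - a) * φ v ≤ (b - a) * φ a + (φ b - φ a) * (v - a) := by nlinarith [h3]
    have e3 : Λ * v ≤ φ v := asympSlope_le hnonneg hvpos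
    have e4 : (b - a) * (Λ * v) ≤ (b - a) * φ v :=
      mul_le_mul_of_nonneg_left e3 (le_of_lt hba)
    have e1 : A + η ≤ η * (v - a) := by
      nlinarith [mul_nonneg (show (0:ℝ) ≤ v - (A / η + a + 1) by linarith) (le_of_lt hηpos),
        hdiv]
    nlinarith [e1, e2, e4]

lemma phi_mono {φ : ℝ → ℝ} (hnonneg : ∀ t : ℝ, 0 ≤ t → 0 ≤ φ t)
    (hconc : ConcaveOn ℝ (Set.Ici 0) φ)
    {a b : ℝ} (ha : 0 ≤ a) (hab : a ≤ b) : φ a ≤ φ b := by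
  have h1 := incr_ge hnonneg hconc ha hab
  have h2 : 0 ≤ asympSlope φ * (b - a) :=
    mul_nonneg (asympSlope_nonneg hnonneg) (by linarith)
  linarith

lemma incr_le_of_slope {φ : ℝ → ℝ} (hconc : ConcaveOn ℝ (Set.Ici 0) φ) (h0 : φ 0 = 0)
    {t u : ℝ} (ht : 0 ≤ t) (htu : t ≤ u) (hu : 0 < u) :
    u * (φ u - φ (u - t)) ≤ t * φ u := by
  have h := conc3 hconc (le_refl 0) (show (0:ℝ) ≤ u - t by linarith)
    (show u - t ≤ u by linarith)
  rw [h0] at h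
  nlinarith

lemma exists_incr_le {φ : ℝ → ℝ} (hnonneg : ∀ t : ℝ, 0 ≤ t → 0 ≤ φ t)
    (hconc : ConcaveOn ℝ (Set.Ici 0) φ) (h0 : φ 0 = 0)
    {t ε : ℝ} (ht : 0 < t) (hε : 0 < ε) :
    ∃ X : ℝ, t ≤ X ∧ φ X - φ (X - t) ≤ asympSlope φ * t + ε := by
  by_contra hcon
  push_neg at hcon
  have grow : ∀ n : ℕ, (asympSlope φ * t + ε) * ((n : ℝ) + 1) ≤ φ (((n : ℝ) + 1) * t) := by
    intro n
    induction n with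
    | zero =>
      have h1 := hcon t le_rfl
      simp only [Nat.cast_zero, zero_add, one_mul]
      rw [sub_self, h0] at h1
      linarith
    | succ n ih =>
      have h1 := hcon (((n : ℝ) + 2) * t) (by nlinarith)
      have h2 : ((n : ℝ) + 2) * t - t = ((n : ℝ) + 1) * t := by ring
      rw [h2] at h1
      have h3 : ((n + 1 : ℕ) : ℝ) + 1 = (n : ℝ) + 2 := by push_cast; ring
      rw [h3]
      nlinarith [ih]
  obtain ⟨u, hu, hslope⟩ := exists_slope_lt hnonneg (div_pos hε ht)
  obtain ⟨n, hn⟩ := exists_nat_ge (u / t)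
  have h1 : u ≤ ((n : ℝ) + 1) * t := by
    rw [div_le_iff₀ ht] at hn; nlinarith
  have h2 := slope_anti hconc h0 hu h1
  have hnt : 0 < ((n : ℝ) + 1) * t := by positivity
  have h4 : φ (((n : ℝ) + 1) * t) / (((n : ℝ) + 1) * t) < asympSlope φ + ε / t :=
    lt_of_le_of_lt h2 hslope
  rw [div_lt_iff₀ hnt] at h4
  have h5 : (asympSlope φ + ε / t) * (((n : ℝ) + 1) * t) =
      (asympSlope φ * t + ε) * ((n : ℝ) + 1) := by field_simp
  linarith [grow n, h4, h5.le]

lemma phi_contOn {φ : ℝ → ℝ} (hconc : ConcaveOn ℝ (Set.Ici 0) φ)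
    (h0 : φ 0 = 0) (hlim : Filter.Tendsto φ (nhdsWithin 0 (Set.Ioi 0)) (nhds 0)) :
    ContinuousOn φ (Set.Ici 0) := by
  intro t ht
  rcases eq_or_lt_of_le (Set.mem_Ici.mp ht) with h | h
  · unfold ContinuousWithinAt
    rw [← h]
    have hins : (Set.Ici (0:ℝ)) = insert 0 (Set.Ioi 0) := Set.Ioi_insert.symm
    rw [hins, nhdsWithin_insert, h0]
    rw [Filter.tendsto_sup]
    constructor
    · have := tendsto_pure_nhds φ 0
      rwa [h0] at this
    · exact hlim
  · have hcont : ContinuousOn φ (interior (Set.Ici (0:ℝ))) := hconc.continuousOn_interior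
    rw [interior_Ici] at hcont
    exact (hcont.continuousAt (IsOpen.mem_nhds isOpen_Ioi h)).continuousWithinAt

lemma ultra4aux (δ a b c p q r : ℝ) (hδ : 0 ≤ δ) (hrq : r ≤ q)
    (h10 : p ≤ q + δ) (h9 : c ≤ max r b + δ) (h4 : q ≤ max a c + δ)
    (h1 : p ≤ max a b + δ) :
    a + c - q ≤ a + b - p + 3 * δ ∨ b + c - r ≤ a + b - p + 3 * δ := by
  have h9' := le_max_iff.mp (show c - δ ≤ max r b by linarith)
  have h4' := le_max_iff.mp (show q - δ ≤ max a c by linarith)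
  have h1' := le_max_iff.mp (show p - δ ≤ max a b by linarith)
  rcases h9' with h9'' | h9'' <;> rcases h4' with h4'' | h4'' <;> rcases h1' with h1'' | h1'' <;>
    first
    | exact Or.inl (by linarith)
    | exact Or.inr (by linarith)

lemma ultra4 (δ a b c p q r : ℝ) (hδ : 0 ≤ δ)
    (h10 : p ≤ max q r + δ) (h9 : c ≤ max r b + δ) (h9' : c ≤ max q a + δ)
    (h4 : q ≤ max a c + δ) (h7 : r ≤ max b c + δ) (h1 : p ≤ max a b + δ) :
    a + c - q ≤ a + b - p + 3 * δ ∨ b + c - r ≤ a + b - p + 3 * δ := by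
  rcases le_total r q with h | h
  · rw [max_eq_left h] at h10
    exact ultra4aux δ a b c p q r hδ h h10 h9 h4 h1
  · rw [max_eq_right h] at h10
    rcases ultra4aux δ b a c p r q hδ h h10 h9' h7 (by rw [max_comm] at h1; exact h1) with
      hh | hh
    · exact Or.inr (by linarith)
    · exact Or.inl (by linarith)

/-- Characterization of unbounded concave metric transforms of the Euclidean
half line that are Gromov hyperbolic. -/
theorem stmt_3 (φ : ℝ → ℝ)
    (hnonneg : ∀ t : ℝ, 0 ≤ t → 0 ≤ φ t)
    (hconc : ConcaveOn ℝ (Set.Ici 0) φ)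
    (h0 : φ 0 = 0)
    (hlim : Filter.Tendsto φ (nhdsWithin 0 (Set.Ioi 0)) (nhds 0))
    (hub : UnboundedOnNonneg φ) :
    IsGromovHyp (halfLineDist φ) ↔
      ((∃ lam : ℝ, 0 < lam ∧ ∃ f : ℝ → ℝ,
          (∀ x : ℝ, 0 ≤ x → 0 ≤ f x) ∧ (∃ M : ℝ, ∀ x : ℝ, 0 ≤ x → f x ≤ M) ∧
          ContinuousOn f (Set.Ici 0) ∧ ConcaveOn ℝ (Set.Ici 0) f ∧ f 0 = 0 ∧
          ∀ x : ℝ, 0 ≤ x → φ x = lam * x + f x) ∨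
        (∃ C : ℝ, ∀ x : ℝ, 0 ≤ x → |φ (2 * x) - φ x| ≤ C)) := by
  constructor
  · rintro ⟨δ, hδ0, hyp⟩
    rcases eq_or_lt_of_le (asympSlope_nonneg hnonneg) with hΛ | hΛpos
    · -- asymptotic slope is zero: φ is logarithm-like
      right
      refine ⟨2 * δ + 1, ?_⟩
      intro t ht
      have hmono2t : φ t ≤ φ (2 * t) := phi_mono hnonneg hconc ht (by linarith)
      rw [abs_of_nonneg (by linarith)]
      rcases eq_or_lt_of_le ht with h | hpos
      · rw [← h]
        norm_num [h0]
        linarith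
      · obtain ⟨u0, hu0, hsl⟩ := exists_slope_lt hnonneg (show 0 < 1 / t by positivity)
        set u := max u0 (2 * t) with hu
        have hu0u : u0 ≤ u := le_max_left _ _
        have h2tu : 2 * t ≤ u := le_max_right _ _
        have hupos : 0 < u := lt_of_lt_of_le hu0 hu0u
        have hsl2 : φ u / u < 1 / t := by
          have := slope_anti hconc h0 hu0 hu0u
          linarith [hsl, hΛ]
        have hφu : t * φ u < u := by
          rw [div_lt_div_iff₀ hupos hpos] at hsl2
          linarith
        have hincr : φ u - φ (u - t) < 1 := by
          have h5 := incr_le_of_slope hconc h0 (le_of_lt hpos) (by linarith) hupos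
          nlinarith
        -- hyperbolicity at w=0, x=t, y=u, z=2t
        have H := hyp ⟨0, le_refl 0⟩ ⟨t, ht⟩ ⟨u, le_of_lt hupos⟩ ⟨2 * t, by linarith⟩
        simp only [gromovProd, halfLineDist] at H
        rw [show |t - (0:ℝ)| = t by rw [sub_zero, abs_of_nonneg ht],
            show |2 * t - (0:ℝ)| = 2 * t by rw [sub_zero, abs_of_nonneg]; linarith,
            show |t - 2 * t| = t by rw [abs_of_nonpos (by linarith)]; ring,
            show |u - (0:ℝ)| = u by rw [sub_zero, abs_of_nonneg (le_of_lt hupos)],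
            show |t - u| = u - t by rw [abs_of_nonpos (by linarith)]; ring,
            show |u - 2 * t| = u - 2 * t by rw [abs_of_nonneg (by linarith)]] at H
        rw [min_eq_left (by
          have : φ (u - 2 * t) ≤ φ u := phi_mono hnonneg hconc (by linarith) (by linarith)
          linarith)] at H
        have hmono_ut : φ (u - t) ≤ φ u := phi_mono hnonneg hconc (by linarith) (by linarith)
        linarith
    · -- positive asymptotic slope
      left
      set Λ := asympSlope φ with hΛdef
      obtain ⟨u0, hu0pos, hsl0⟩ := exists_slope_lt hnonneg hΛpos
      have hφu0 : φ u0 < 2 * Λ * u0 := by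
        rw [div_lt_iff₀ hu0pos] at hsl0; nlinarith
      set M := max (2 * Λ * u0) (4 * δ + 2) with hM
      have key : ∀ t : ℝ, 0 ≤ t → φ t - Λ * t ≤ M := by
        intro t ht
        by_cases hS : φ t - Λ * t ≤ 2 * Λ * u0
        · exact le_trans hS (le_max_left _ _)
        push_neg at hS
        have hΛ0 : (0:ℝ) ≤ Λ := le_of_lt hΛpos
        have hSpos : 0 < φ t - Λ * t :=
          lt_of_le_of_lt (by nlinarith) hS
        set S := φ t - Λ * t with hSdef
        have htu0 : u0 ≤ t := by
          by_contra hc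
          push_neg at hc
          have h1 : φ t ≤ φ u0 := phi_mono hnonneg hconc ht (le_of_lt hc)
          have h2 : 0 ≤ Λ * t := mul_nonneg hΛ0 ht
          have : S ≤ φ t := by rw [hSdef]; linarith
          linarith
        have htpos : 0 < t := lt_of_lt_of_le hu0pos htu0
        have hφt : φ t < 2 * Λ * t := by
          have hsa := slope_anti hconc h0 hu0pos htu0
          rw [div_le_div_iff₀ htpos hu0pos] at hsa
          nlinarith
        have hSlt : S < Λ * t := by rw [hSdef]; linarith
        set m := S / (2 * Λ) with hm
        have h2Λpos : 0 < 2 * Λ := by linarith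
        have hmpos : 0 < m := div_pos hSpos h2Λpos
        have h2Λm : 2 * Λ * m = S := by rw [hm]; field_simp
        have hmu0 : u0 < m := by rw [hm, lt_div_iff₀ h2Λpos]; linarith
        have hmt : m < t := by rw [hm, div_lt_iff₀ h2Λpos]; nlinarith
        have hφm : φ m < 2 * Λ * m := by
          have hsa := slope_anti hconc h0 hu0pos (le_of_lt hmu0)
          rw [div_le_div_iff₀ hmpos hu0pos] at hsa
          nlinarith
        obtain ⟨X, hXt, hXincr⟩ := exists_incr_le hnonneg hconc h0 htpos one_pos
        have H := hyp ⟨t, ht⟩ ⟨X, by linarith⟩ ⟨t - m, by linarith⟩ ⟨0, le_refl 0⟩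
        simp only [gromovProd, halfLineDist] at H
        rw [show |X - t| = X - t by rw [abs_of_nonneg]; linarith,
            show |(0:ℝ) - t| = t by rw [abs_of_nonpos (by linarith)]; ring,
            show |X - (0:ℝ)| = X by rw [sub_zero, abs_of_nonneg]; linarith,
            show |t - m - t| = m by rw [abs_of_nonpos (by linarith)]; ring,
            show |t - m - (0:ℝ)| = t - m by rw [sub_zero, abs_of_nonneg]; linarith,
            show |X - (t - m)| = X - t + m by
              rw [abs_of_nonneg (show (0:ℝ) ≤ X - (t - m) by linarith)]; ring] at H
        have hB : Λ * m ≤ (φ m + φ t - φ (t - m)) / 2 := by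
          have b1 : Λ * m ≤ φ m := asympSlope_le hnonneg hmpos
          have b2 := incr_ge hnonneg hconc (show (0:ℝ) ≤ t - m by linarith)
            (show t - m ≤ t by linarith)
          rw [show t - (t - m) = m by ring] at b2
          linarith
        have hG : (φ (X - t) + φ m - φ (X - t + m)) / 2 ≤ (φ m - Λ * m) / 2 := by
          have g1 := incr_ge hnonneg hconc (show (0:ℝ) ≤ X - t by linarith)
            (show X - t ≤ X - t + m by linarith)
          rw [show X - t + m - (X - t) = m by ring] at g1
          linarith
        have hA : (S - 1) / 2 ≤ (φ (X - t) + φ t - φ X) / 2 := by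
          rw [hSdef]
          linarith [hXincr]
        have hminle := min_le_min hA hB
        have hfinal : min ((S - 1) / 2) (Λ * m) ≤ (φ m - Λ * m) / 2 + δ :=
          le_trans hminle (by linarith [H])
        have hout : S ≤ 4 * δ + 2 := by
          rcases le_total ((S - 1) / 2) (Λ * m) with hc | hc
          · rw [min_eq_left hc] at hfinal
            linarith [hφm, h2Λm]
          · rw [min_eq_right hc] at hfinal
            linarith [hφm, h2Λm]
        exact le_trans hout (le_max_right _ _)
      refine ⟨Λ, hΛpos, fun x => φ x - Λ * x, ?_, ⟨M, key⟩, ?_, ?_, by simp [h0],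
        fun x hx => by ring⟩
      · intro x hx
        show (0:ℝ) ≤ φ x - Λ * x
        have := asympSlope_le' hnonneg h0 hx
        linarith
      · exact (phi_contOn hconc h0 hlim).sub
          ((continuous_const.mul continuous_id).continuousOn)
      · have hlin : ConvexOn ℝ (Set.Ici 0) (fun x : ℝ => Λ * x) :=
          ⟨convex_Ici 0, fun x _ y _ a b _ _ _ => le_of_eq (by simp only [smul_eq_mul]; ring)⟩
        exact hconc.sub hlin
  · rintro (⟨lam, hlam, f, hfnn, ⟨M, hfM⟩, hfcont, hfconc, hf0, heq⟩ | ⟨C, hC⟩)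
    · -- case (i): bounded perturbation of a euclidean half line
      have hM0 : 0 ≤ M := by
        have := hfM 0 le_rfl
        linarith [hf0.symm.le.trans this]
      refine ⟨3 * M, by linarith, ?_⟩
      intro w x y z
      have key : ∀ u v : {t : ℝ // 0 ≤ t},
          halfLineDist φ u v = lam * |u.1 - v.1| + f |u.1 - v.1| := fun u v => by
        unfold halfLineDist; exact heq _ (abs_nonneg _)
      have fb : ∀ u v : {t : ℝ // 0 ≤ t}, 0 ≤ f |u.1 - v.1| ∧ f |u.1 - v.1| ≤ M :=
        fun u v => ⟨hfnn _ (abs_nonneg _), hfM _ (abs_nonneg _)⟩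
      obtain ⟨f1a, f1b⟩ := fb x w
      obtain ⟨f2a, f2b⟩ := fb z w
      obtain ⟨f3a, f3b⟩ := fb x z
      obtain ⟨f4a, f4b⟩ := fb y w
      obtain ⟨f5a, f5b⟩ := fb y z
      obtain ⟨f6a, f6b⟩ := fb x y
      have L := line0 w.1 x.1 y.1 z.1
      simp only [gromovProd, key]
      rcases le_total (|x.1 - w.1| + |z.1 - w.1| - |x.1 - z.1|)
        (|y.1 - w.1| + |z.1 - w.1| - |y.1 - z.1|) with hc | hc
      · rw [min_eq_left hc] at L
        refine le_trans (sub_le_sub_right (min_le_left _ _) _) ?_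
        have L2 : lam * |x.1 - w.1| + lam * |z.1 - w.1| - lam * |x.1 - z.1| ≤
            lam * |x.1 - w.1| + lam * |y.1 - w.1| - lam * |x.1 - y.1| := by
          nlinarith [L, le_of_lt hlam]
        linarith
      · rw [min_eq_right hc] at L
        refine le_trans (sub_le_sub_right (min_le_right _ _) _) ?_
        have L2 : lam * |y.1 - w.1| + lam * |z.1 - w.1| - lam * |y.1 - z.1| ≤
            lam * |x.1 - w.1| + lam * |y.1 - w.1| - lam * |x.1 - y.1| := by
          nlinarith [L, le_of_lt hlam]
        linarith
    · -- case (ii): logarithm-like, approximately ultrametric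
      set C' := max C 0 with hC'
      have hC'0 : (0:ℝ) ≤ C' := le_max_right _ _
      have hdbl : ∀ t : ℝ, 0 ≤ t → φ (2 * t) ≤ φ t + C' := by
        intro t ht
        have h1 := hC t ht
        have h2 := le_of_abs_le h1
        have h3 : C ≤ C' := le_max_left _ _
        linarith
      have um : ∀ u v t : {t : ℝ // 0 ≤ t}, halfLineDist φ u v ≤
          max (halfLineDist φ u t) (halfLineDist φ t v) + C' := by
        intro u v t
        have hab : |u.1 - v.1| ≤ 2 * max |u.1 - t.1| |t.1 - v.1| := by
          have h1 : |u.1 - v.1| ≤ |u.1 - t.1| + |t.1 - v.1| := abs_sub_le _ _ _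
          have h2 := le_max_left |u.1 - t.1| |t.1 - v.1|
          have h3 := le_max_right |u.1 - t.1| |t.1 - v.1|
          linarith
        have h1 : φ |u.1 - v.1| ≤ φ (2 * max |u.1 - t.1| |t.1 - v.1|) :=
          phi_mono hnonneg hconc (abs_nonneg _) hab
        have h2 : φ (2 * max |u.1 - t.1| |t.1 - v.1|) ≤ φ (max |u.1 - t.1| |t.1 - v.1|) + C' :=
          hdbl _ (le_trans (abs_nonneg _) (le_max_left _ _))
        have h3 : φ (max |u.1 - t.1| |t.1 - v.1|) = max (φ |u.1 - t.1|) (φ |t.1 - v.1|) := by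
          rcases le_total |u.1 - t.1| |t.1 - v.1| with h | h
          · rw [max_eq_right h, max_eq_right (phi_mono hnonneg hconc (abs_nonneg _) h)]
          · rw [max_eq_left h, max_eq_left (phi_mono hnonneg hconc (abs_nonneg _) h)]
        unfold halfLineDist
        linarith [h1, h2, h3.le, h3.ge]
      refine ⟨3 * C', by linarith, ?_⟩
      intro w x y z
      have dsymm : ∀ u v : {t : ℝ // 0 ≤ t}, halfLineDist φ u v = halfLineDist φ v u :=
        fun u v => by unfold halfLineDist; rw [abs_sub_comm]
      have U := ultra4 C' (halfLineDist φ x w) (halfLineDist φ y w) (halfLineDist φ z w)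
        (halfLineDist φ x y) (halfLineDist φ x z) (halfLineDist φ y z) hC'0
        (by have := um x y z; rwa [dsymm z y] at this)
        (by have := um z w y; rwa [dsymm z y] at this)
        (by have := um z w x; rwa [dsymm z x] at this)
        (by have := um x z w; rwa [dsymm w z] at this)
        (by have := um y z w; rwa [dsymm w z] at this)
        (by have := um x y w; rwa [dsymm w y] at this)
      rcases U with hU | hU
      · refine le_trans (sub_le_sub_right (min_le_left _ _) _) ?_
        simp only [gromovProd]
        linarith
      · refine le_trans (sub_le_sub_right (min_le_right _ _) _) ?_
        simp only [gromovProd]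
        linarith
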